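/- For every choice of constants α > 0, T > 0 and C₁ > 0 there exists a constant C > 0 with the following property. For every abstract FEM setting (H, V, ‖·‖_h, a_h) with ellipticity constant α, every h > 0, every linear map E : V → H with ‖E v‖ ≤ C₁ h² ‖v‖_h for all v ∈ V, every continuously differentiable g : [0,T] → H, every continuous r : [0,T] → H, and every twice continuously differentiable θ : [0,T] → V with θ(0) = 0, θ'(0) = 0 and (θ''(t), v) + a_h(θ(t), v) = (g(t), E v) − (r(t), v) for all v ∈ V and t ∈ [0,T], one has for every t ∈ [0,T]: ‖θ'(t)‖² + α ‖θ(t)‖_h² ≤ C ( h⁴ ( sup_{s ∈ [0,T]} ‖g(s)‖² + ∫₀ᵀ ‖g'(s)‖² ds ) + ∫₀ᵀ ‖r(s)‖² ds ). -/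

import Mathlib

open scoped RealInnerProductSpace
open Set Filter Topology

section helpers
private lemma quad_bound' {al b d y : ℝ} (hal : 0 < al) (hb : 0 ≤ b) (hd : 0 ≤ d) (hy : 0 ≤ y)
    (h : al * y ^ 2 ≤ b * y + d) : y ≤ b / al + Real.sqrt (d / al) := by
  by_contra hcon
  push_neg at hcon
  have hs0 : 0 ≤ Real.sqrt (d / al) := Real.sqrt_nonneg _
  have hsq : Real.sqrt (d / al) ^ 2 = d / al := Real.sq_sqrt (by positivity)
  have hba : 0 ≤ b / al := by positivity
  have hys : Real.sqrt (d / al) < y := lt_of_le_of_lt (le_add_of_nonneg_left hba) hcon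
  have h1 : b / al + Real.sqrt (d / al) < y := hcon
  have h2 : d = al * Real.sqrt (d / al) ^ 2 := by
    rw [hsq]; field_simp
  have hy0 : 0 < y := lt_of_le_of_lt (by positivity) hcon
  have h3 : b + al * Real.sqrt (d / al) < al * y := by
    have := mul_lt_mul_of_pos_left h1 hal
    rw [mul_add, mul_div_cancel₀ _ (ne_of_gt hal)] at this
    exact this
  have h4 : (b + al * Real.sqrt (d / al)) * y < (al * y) * y :=
    mul_lt_mul_of_pos_right h3 hy0
  have h5 : al * Real.sqrt (d / al) * Real.sqrt (d / al) ≤ al * Real.sqrt (d / al) * y :=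
    mul_le_mul_of_nonneg_left hys.le (by positivity)
  nlinarith [h4, h5, h2]

private lemma approx_contOn' {S : Set ℝ} {f : ℝ → ℝ}
    (h : ∀ ε : ℝ, 0 < ε → ∃ φ : ℝ → ℝ, ContinuousOn φ S ∧ ∀ x ∈ S, |f x - φ x| ≤ ε) :
    ContinuousOn f S := by
  intro x hx
  rw [Metric.continuousWithinAt_iff]
  intro ε hε
  obtain ⟨φ, hφ, happ⟩ := h (ε/4) (by linarith)
  have hc := hφ x hx
  rw [Metric.continuousWithinAt_iff] at hc
  obtain ⟨δ, hδ, hball⟩ := hc (ε/4) (by linarith)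
  refine ⟨δ, hδ, fun {y} hy hdy => ?_⟩
  have h1 := happ y hy
  have h2 := happ x hx
  have h3 := hball hy hdy
  rw [Real.dist_eq] at h3 ⊢
  have : |f y - f x| ≤ |f y - φ y| + |φ y - φ x| + |φ x - f x| := by
    have := abs_sub_le (f y) (φ y) (f x)
    have := abs_sub_le (φ y) (φ x) (f x)
    calc |f y - f x| ≤ |f y - φ y| + |φ y - f x| := abs_sub_le _ _ _
      _ ≤ |f y - φ y| + (|φ y - φ x| + |φ x - f x|) := by
          have := abs_sub_le (φ y) (φ x) (f x); linarith
      _ = _ := by ring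
  have h4 : |φ x - f x| = |f x - φ x| := abs_sub_comm _ _
  linarith

private lemma diag_est' {E : Type*} [NormedAddCommGroup E] {S : Set ℝ} {f : ℝ → ℝ → ℝ}
    {φ : ℝ → E} {M : ℝ}
    (hφ : ContinuousOn φ S)
    (hlip : ∀ t ∈ S, ∀ t' ∈ S, ∀ s ∈ S, |f t s - f t' s| ≤ M * ‖φ t - φ t'‖)
    (hc : ∀ t ∈ S, ContinuousWithinAt (fun s => f t s) S t) :
    ∀ t ∈ S, ∀ c : ℝ, 0 < c → ∃ δ > 0, ∀ σ ∈ S, ∀ s ∈ S,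
      |σ - t| < δ → |s - t| < δ → |f σ s - f t t| < c := by
  intro t ht c hc0
  have h1 := hφ t ht
  rw [Metric.continuousWithinAt_iff] at h1
  obtain ⟨δ₁, hδ₁, hb1⟩ := h1 (c/(2*(|M|+1))) (by positivity)
  have h2 := hc t ht
  rw [Metric.continuousWithinAt_iff] at h2
  obtain ⟨δ₂, hδ₂, hb2⟩ := h2 (c/2) (by linarith)
  refine ⟨min δ₁ δ₂, lt_min hδ₁ hδ₂, fun σ hσ s hs hd1 hd2 => ?_⟩
  have e1 : |f σ s - f t s| ≤ M * ‖φ σ - φ t‖ := hlip σ hσ t ht s hs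
  have e2 : dist (φ σ) (φ t) < c/(2*(|M|+1)) := hb1 hσ (by rw [Real.dist_eq]; exact lt_of_lt_of_le hd1 (min_le_left _ _))
  rw [dist_eq_norm] at e2
  have e3 : dist (f t s) (f t t) < c/2 := hb2 hs (by rw [Real.dist_eq]; exact lt_of_lt_of_le hd2 (min_le_right _ _))
  rw [Real.dist_eq] at e3
  have e4 : M * ‖φ σ - φ t‖ ≤ |M| * ‖φ σ - φ t‖ :=
    mul_le_mul_of_nonneg_right (le_abs_self M) (norm_nonneg _)
  have e5 : |M| * ‖φ σ - φ t‖ < c/2 := by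
    have hM1 : (0:ℝ) < |M| + 1 := by positivity
    have e5a : (|M|+1) * ‖φ σ - φ t‖ < (|M|+1) * (c/(2*(|M|+1))) :=
      mul_lt_mul_of_pos_left e2 hM1
    have e5b : (|M|+1) * (c/(2*(|M|+1))) = c/2 := by field_simp
    have e5c : |M| * ‖φ σ - φ t‖ ≤ (|M|+1) * ‖φ σ - φ t‖ :=
      mul_le_mul_of_nonneg_right (by linarith [abs_nonneg M]) (norm_nonneg _)
    linarith
  calc |f σ s - f t t| ≤ |f σ s - f t s| + |f t s - f t t| := abs_sub_le _ _ _
    _ < c/2 + c/2 := by linarith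
    _ = c := by ring

private lemma diag_cont' {E : Type*} [NormedAddCommGroup E] {S : Set ℝ} {f : ℝ → ℝ → ℝ}
    {φ : ℝ → E} {M : ℝ}
    (hφ : ContinuousOn φ S)
    (hlip : ∀ t ∈ S, ∀ t' ∈ S, ∀ s ∈ S, |f t s - f t' s| ≤ M * ‖φ t - φ t'‖)
    (hc : ∀ t ∈ S, ContinuousWithinAt (fun s => f t s) S t) :
    ContinuousOn (fun t => f t t) S := by
  intro t ht
  rw [Metric.continuousWithinAt_iff]
  intro ε hε
  obtain ⟨δ, hδ, hest⟩ := diag_est' hφ hlip hc t ht ε hε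
  refine ⟨δ, hδ, fun {y} hy hdy => ?_⟩
  rw [Real.dist_eq] at hdy ⊢
  exact hest y hy y hy hdy hdy
end helpers

set_option maxHeartbeats 4000000 in
/-- Energy-norm error estimate for the semidiscrete approximation. -/
theorem semidiscrete_energy_error (α T C₁ : ℝ) (hα : 0 < α) (hT : 0 < T) (hC₁ : 0 < C₁) :
    ∃ C > 0,
      ∀ (H : Type) [NormedAddCommGroup H] [InnerProductSpace ℝ H] [CompleteSpace H]
        (V : Submodule ℝ H) (Nh : Seminorm ℝ V) (a : V →ₗ[ℝ] V →ₗ[ℝ] ℝ),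
        (∀ w v : V, a w v = a v w) →
        (∀ w : V, α * Nh w ^ 2 ≤ a w w) →
        ∀ (h : ℝ), 0 < h →
          ∀ (E : V →ₗ[ℝ] H), (∀ v : V, ‖E v‖ ≤ C₁ * h ^ 2 * Nh v) →
            ∀ (g g' : ℝ → H),
              (∀ t ∈ Set.Icc (0 : ℝ) T, HasDerivWithinAt g (g' t) (Set.Icc (0 : ℝ) T) t) →
              ContinuousOn g' (Set.Icc (0 : ℝ) T) →
              ∀ (r : ℝ → H), ContinuousOn r (Set.Icc (0 : ℝ) T) →
                ∀ (θ θ' θ'' : ℝ → V),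
                  (∀ t ∈ Set.Icc (0 : ℝ) T,
                    HasDerivWithinAt θ (θ' t) (Set.Icc (0 : ℝ) T) t) →
                  (∀ t ∈ Set.Icc (0 : ℝ) T,
                    HasDerivWithinAt θ' (θ'' t) (Set.Icc (0 : ℝ) T) t) →
                  ContinuousOn θ'' (Set.Icc (0 : ℝ) T) →
                  θ 0 = 0 → θ' 0 = 0 →
                  (∀ t ∈ Set.Icc (0 : ℝ) T, ∀ v : V,
                    ⟪((θ'' t : V) : H), (v : H)⟫ + a (θ t) v
                      = ⟪g t, E v⟫ - ⟪r t, (v : H)⟫) →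
                  ∀ t ∈ Set.Icc (0 : ℝ) T,
                    ‖θ' t‖ ^ 2 + α * Nh (θ t) ^ 2
                      ≤ C * (h ^ 4 * ((⨆ s : Set.Icc (0 : ℝ) T, ‖g ↑s‖ ^ 2)
                              + ∫ s in (0 : ℝ)..T, ‖g' s‖ ^ 2)
                          + ∫ s in (0 : ℝ)..T, ‖r s‖ ^ 2) := by
  have hγ : 0 < C₁^2/α := by positivity
  refine ⟨16*(C₁^2/α + 1)*(T+1), by positivity, ?_⟩
  intro H _ _ _ V Nh a ha hell h hh E hE g g' hg hg' r hr θ θ' θ'' hθ hθ' hθ'' hθ0 hθ'0 heq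
  set S : Set ℝ := Set.Icc (0:ℝ) T with hSdef
  have hS_ne : S.Nonempty := ⟨0, le_refl 0, hT.le⟩
  have h0S : (0:ℝ) ∈ S := ⟨le_refl 0, hT.le⟩
  -- coercions to H
  set θc : ℝ → H := fun t => ((θ t : H)) with hθcdef
  set θ'c : ℝ → H := fun t => ((θ' t : H)) with hθ'cdef
  set θ''c : ℝ → H := fun t => ((θ'' t : H)) with hθ''cdef
  set p : ℝ → H := fun t => r t + θ''c t with hpdef
  set u : ℝ → ℝ → ℝ := fun t s => ⟪g t, E (θ s)⟫ with hudef
  set Dk : ℝ → ℝ → ℝ := fun t s => ⟪g' t, E (θ s)⟫ + ⟪p s, θ'c t⟫ with hDkdef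
  set Zk : ℝ → ℝ → ℝ := fun t s => u t s + ⟪p s, θc t⟫ with hZkdef
  set A : ℝ → ℝ := fun t => a (θ t) (θ t) with hAdef
  -- derivatives of coercions
  have hθcd : ∀ t ∈ S, HasDerivWithinAt θc (θ'c t) S t := by
    intro t ht
    exact (V.subtypeL.hasFDerivAt).comp_hasDerivWithinAt t (hθ t ht)
  have hθ'cd : ∀ t ∈ S, HasDerivWithinAt θ'c (θ''c t) S t := by
    intro t ht
    exact (V.subtypeL.hasFDerivAt).comp_hasDerivWithinAt t (hθ' t ht)
  -- continuities
  have hgc : ContinuousOn g S := fun t ht => (hg t ht).continuousWithinAt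
  have hθcc : ContinuousOn θc S := fun t ht => (hθcd t ht).continuousWithinAt
  have hθ'cc : ContinuousOn θ'c S := fun t ht => (hθ'cd t ht).continuousWithinAt
  have hθ''cc : ContinuousOn θ''c S := ((V.subtypeL.continuous).comp_continuousOn hθ'')
  have hpc : ContinuousOn p S := hr.add hθ''cc
  -- bounds
  obtain ⟨tg, htgS, htgmax⟩ := isCompact_Icc.exists_isMaxOn hS_ne hgc.norm
  set Mg : ℝ := ‖g tg‖ with hMgdef
  have hMg : ∀ s ∈ S, ‖g s‖ ≤ Mg := fun s hs => htgmax hs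
  have hMg0 : 0 ≤ Mg := norm_nonneg _
  obtain ⟨Mg'0, hMg'0⟩ := isCompact_Icc.exists_bound_of_continuousOn hg'
  set Mg' : ℝ := max Mg'0 0 with hMg'def
  have hMg' : ∀ s ∈ S, ‖g' s‖ ≤ Mg' := fun s hs => le_trans (hMg'0 s hs) (le_max_left _ _)
  have hMg'nn : 0 ≤ Mg' := le_max_right _ _
  obtain ⟨Mp0, hMp0⟩ := isCompact_Icc.exists_bound_of_continuousOn hpc
  set Mp : ℝ := max Mp0 0 with hMpdef
  have hMp : ∀ s ∈ S, ‖p s‖ ≤ Mp := fun s hs => le_trans (hMp0 s hs) (le_max_left _ _)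
  have hMpnn : 0 ≤ Mp := le_max_right _ _
  obtain ⟨Mθ0, hMθ0⟩ := isCompact_Icc.exists_bound_of_continuousOn hθcc
  set Mθ : ℝ := max Mθ0 0 with hMθdef
  have hMθ : ∀ s ∈ S, ‖θc s‖ ≤ Mθ := fun s hs => le_trans (hMθ0 s hs) (le_max_left _ _)
  have hMθnn : 0 ≤ Mθ := le_max_right _ _
  -- rearranged equation
  have hEQ : ∀ t ∈ S, ∀ v : V, a (θ t) v = ⟪g t, E v⟫ - ⟪p t, (v : H)⟫ := by
    intro t ht v
    have h1 := heq t ht v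
    have h2 : ⟪p t, (v:H)⟫ = ⟪r t, (v:H)⟫ + ⟪θ''c t, (v:H)⟫ := by
      rw [hpdef]; exact inner_add_left _ _ _
    have h3 : θ''c t = ((θ'' t : V) : H) := rfl
    rw [h2, h3]
    linarith only [h1]
  have hAineq : ∀ t : ℝ, α * Nh (θ t) ^ 2 ≤ A t := fun t => hell (θ t)
  have hA0 : ∀ t : ℝ, 0 ≤ A t := fun t => le_trans (by positivity) (hAineq t)
  -- pointwise bound on the seminorm along the trajectory
  set cN : ℝ → ℝ := fun t => C₁ * h^2 * Nh (θ t) with hcNdef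
  have hcN0 : ∀ t, 0 ≤ cN t := fun t => by
    have := apply_nonneg Nh (θ t); positivity
  have hEb : ∀ s : ℝ, ‖E (θ s)‖ ≤ cN s := fun s => hE (θ s)
  set Q : ℝ := Mg * (C₁ * h^2) / α + Real.sqrt (Mp * Mθ / α) with hQdef
  set MB : ℝ := C₁ * h^2 * Q with hMBdef
  have hNhQ : ∀ s ∈ S, Nh (θ s) ≤ Q := by
    intro s hs
    have e0 : A s = ⟪g s, E (θ s)⟫ - ⟪p s, θc s⟫ := hEQ s hs (θ s)
    have e1 : ⟪g s, E (θ s)⟫ ≤ ‖g s‖ * ‖E (θ s)‖ := real_inner_le_norm _ _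
    have e2 : ‖g s‖ * ‖E (θ s)‖ ≤ Mg * cN s :=
      mul_le_mul (hMg s hs) (hEb s) (norm_nonneg _) hMg0
    have e3 : -⟪p s, θc s⟫ ≤ ‖p s‖ * ‖θc s‖ := by
      have k1 := abs_real_inner_le_norm (p s) (θc s)
      have k2 := neg_abs_le ((⟪p s, θc s⟫ : ℝ))
      linarith only [k1, k2]
    have e4 : ‖p s‖ * ‖θc s‖ ≤ Mp * Mθ :=
      mul_le_mul (hMp s hs) (hMθ s hs) (norm_nonneg _) hMpnn
    have e5 : α * Nh (θ s) ^ 2 ≤ (Mg * (C₁ * h^2)) * Nh (θ s) + Mp * Mθ := by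
      have := hAineq s
      have hcn : Mg * cN s = (Mg * (C₁ * h^2)) * Nh (θ s) := by rw [hcNdef]; ring
      linarith only [e0, e1, e2, e3, e4, hAineq s, hcn, this]
    have := quad_bound' hα (by positivity) (by positivity) (apply_nonneg Nh (θ s)) e5
    rw [hQdef]
    exact this
  have hEMB : ∀ s ∈ S, ‖E (θ s)‖ ≤ MB := by
    intro s hs
    refine le_trans (hEb s) ?_
    rw [hcNdef, hMBdef]
    exact mul_le_mul_of_nonneg_left (hNhQ s hs) (by positivity)
  have hMB0 : 0 ≤ MB := le_trans (norm_nonneg _) (hEMB 0 h0S)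
  -- second-variable continuity of u
  have hswap : ∀ t ∈ S, ∀ s ∈ S,
      u t s = ⟪g s, E (θ t)⟫ - ⟪p s, θc t⟫ + ⟪p t, θc s⟫ := by
    intro t ht s hs
    have e1 := hEQ t ht (θ s)
    have e2 := hEQ s hs (θ t)
    have e3 := ha (θ t) (θ s)
    have l1 : u t s = ⟪g t, E (θ s)⟫ := rfl
    have l2 : θc t = ((θ t : V) : H) := rfl
    have l3 : θc s = ((θ s : V) : H) := rfl
    rw [l1, l2, l3]
    linarith only [e1, e2, e3]
  have hu2 : ∀ t ∈ S, ContinuousOn (fun s => u t s) S := by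
    intro t ht
    have hbase : ContinuousOn
        (fun s => ⟪g s, E (θ t)⟫ - ⟪p s, θc t⟫ + ⟪p t, θc s⟫) S :=
      ((hgc.inner continuousOn_const).sub (hpc.inner continuousOn_const)).add
        (continuousOn_const.inner hθcc)
    exact hbase.congr (fun s hs => hswap t ht s hs)
  -- continuity of s ↦ ⟪z, E (θ s)⟫ for z = g' t₀
  have hρ : ∀ t0 ∈ S, ContinuousOn (fun s => (⟪g' t0, E (θ s)⟫ : ℝ)) S := by
    intro t0 ht0
    apply approx_contOn'
    intro ε hε
    -- find a point y where the slope of g approximates g' t0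
    have hnb : (𝓝[S \ {t0}] t0).NeBot := by
      rcases lt_or_ge t0 T with hlt | hge
      · have h1 : t0 ∈ closure (Set.Ioo t0 T) := by
          rw [closure_Ioo (ne_of_lt hlt)]; exact ⟨le_refl _, hlt.le⟩
        have h2 : Set.Ioo t0 T ⊆ S \ {t0} := fun y hy =>
          ⟨⟨le_trans ht0.1 hy.1.le, hy.2.le⟩, (ne_of_gt hy.1)⟩
        exact mem_closure_iff_nhdsWithin_neBot.mp (closure_mono h2 h1)
      · have ht0T : t0 = T := le_antisymm ht0.2 hge
        have hpos : (0:ℝ) < t0 := ht0T ▸ hT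
        have h1 : t0 ∈ closure (Set.Ioo 0 t0) := by
          rw [closure_Ioo (ne_of_lt hpos)]; exact ⟨hpos.le, le_refl _⟩
        have h2 : Set.Ioo 0 t0 ⊆ S \ {t0} := fun y hy =>
          ⟨⟨hy.1.le, le_trans hy.2.le (le_of_eq ht0T)⟩, (ne_of_lt hy.2)⟩
        exact mem_closure_iff_nhdsWithin_neBot.mp (closure_mono h2 h1)
    have hslope := hasDerivWithinAt_iff_tendsto_slope.mp (hg t0 ht0)
    have hball : Metric.ball (g' t0) (ε/(MB+1)) ∈ 𝓝 (g' t0) :=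
      Metric.ball_mem_nhds _ (by positivity)
    have hev : ∀ᶠ y in 𝓝[S \ {t0}] t0,
        slope g t0 y ∈ Metric.ball (g' t0) (ε/(MB+1)) := hslope hball
    obtain ⟨y, hyclose, hymem⟩ := (hev.and eventually_mem_nhdsWithin).exists
    have hyS : y ∈ S := hymem.1
    have hyne : y ≠ t0 := hymem.2
    refine ⟨fun s => (y - t0)⁻¹ * (u y s - u t0 s), ?_, ?_⟩
    · exact continuousOn_const.mul ((hu2 y hyS).sub (hu2 t0 ht0))
    · intro s hs
      have hrw : (⟪g' t0, E (θ s)⟫ : ℝ) - (y - t0)⁻¹ * (u y s - u t0 s)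
          = ⟪g' t0 - slope g t0 y, E (θ s)⟫ := by
        rw [slope_def_module, inner_sub_left, real_inner_smul_left]
        have : u y s - u t0 s = ⟪g y - g t0, E (θ s)⟫ := by
          rw [inner_sub_left]
        rw [this]
      rw [hrw]
      have hb1 : ‖g' t0 - slope g t0 y‖ ≤ ε/(MB+1) := by
        have := hyclose
        rw [Metric.mem_ball, dist_eq_norm] at this
        rw [norm_sub_rev]
        exact this.le
      have hb2 : |(⟪g' t0 - slope g t0 y, E (θ s)⟫ : ℝ)|
          ≤ ‖g' t0 - slope g t0 y‖ * ‖E (θ s)‖ := abs_real_inner_le_norm _ _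
      have hb3 : ‖g' t0 - slope g t0 y‖ * ‖E (θ s)‖ ≤ (ε/(MB+1)) * MB :=
        mul_le_mul hb1 (hEMB s hs) (norm_nonneg _) (by positivity)
      have hb4 : (ε/(MB+1)) * MB ≤ ε := by
        rw [div_mul_eq_mul_div, div_le_iff₀ (by positivity : (0:ℝ) < MB+1)]
        nlinarith only [hε, hMB0]
      linarith only [abs_nonneg ((⟪g' t0 - slope g t0 y, E (θ s)⟫ : ℝ)), hb2, hb3, hb4, le_abs_self ((⟪g' t0 - slope g t0 y, E (θ s)⟫ : ℝ))]
  -- continuity of the kernels on the diagonal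
  have hD2 : ∀ t ∈ S, ContinuousOn (fun s => Dk t s) S := by
    intro t ht
    exact (hρ t ht).add (hpc.inner continuousOn_const)
  set φpair : ℝ → H × H := fun t => (g' t, θ'c t) with hφpairdef
  have hφpairc : ContinuousOn φpair S := hg'.prodMk hθ'cc
  have hDlip : ∀ t ∈ S, ∀ t' ∈ S, ∀ s ∈ S,
      |Dk t s - Dk t' s| ≤ (MB + Mp) * ‖φpair t - φpair t'‖ := by
    intro t ht t' ht' s hs
    have e1 : Dk t s - Dk t' s
        = ⟪g' t - g' t', E (θ s)⟫ + ⟪p s, θ'c t - θ'c t'⟫ := by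
      rw [hDkdef]; simp only [inner_sub_left, inner_sub_right]; ring
    have e2 : |(⟪g' t - g' t', E (θ s)⟫ : ℝ)| ≤ ‖g' t - g' t'‖ * MB := by
      refine le_trans (abs_real_inner_le_norm _ _) ?_
      exact mul_le_mul_of_nonneg_left (hEMB s hs) (norm_nonneg _)
    have e3 : |(⟪p s, θ'c t - θ'c t'⟫ : ℝ)| ≤ Mp * ‖θ'c t - θ'c t'‖ := by
      refine le_trans (abs_real_inner_le_norm _ _) ?_
      exact mul_le_mul_of_nonneg_right (hMp s hs) (norm_nonneg _)
    have e4 : ‖g' t - g' t'‖ ≤ ‖φpair t - φpair t'‖ := by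
      have : φpair t - φpair t' = (g' t - g' t', θ'c t - θ'c t') := rfl
      rw [this, Prod.norm_def]; exact le_max_left _ _
    have e5 : ‖θ'c t - θ'c t'‖ ≤ ‖φpair t - φpair t'‖ := by
      have : φpair t - φpair t' = (g' t - g' t', θ'c t - θ'c t') := rfl
      rw [this, Prod.norm_def]; exact le_max_right _ _
    calc |Dk t s - Dk t' s| ≤ |(⟪g' t - g' t', E (θ s)⟫ : ℝ)|
          + |(⟪p s, θ'c t - θ'c t'⟫ : ℝ)| := by rw [e1]; exact abs_add_le _ _
      _ ≤ ‖g' t - g' t'‖ * MB + Mp * ‖θ'c t - θ'c t'‖ := add_le_add e2 e3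
      _ ≤ (MB + Mp) * ‖φpair t - φpair t'‖ := by
          nlinarith only [norm_nonneg (g' t - g' t'), norm_nonneg (θ'c t - θ'c t'),
            norm_nonneg (φpair t - φpair t'), e4, e5, hMB0, hMpnn]
  have hDest := diag_est' hφpairc hDlip (fun t ht => (hD2 t ht) t ht)
  have hDdiag : ContinuousOn (fun t => Dk t t) S := diag_cont' hφpairc hDlip
    (fun t ht => (hD2 t ht) t ht)
  -- diagonal continuity of e(t,s) = ⟪g' t, E θ s⟫ and u
  have hediag : ContinuousOn (fun t => (⟪g' t, E (θ t)⟫ : ℝ)) S := by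
    refine diag_cont' (f := fun t s => (⟪g' t, E (θ s)⟫ : ℝ)) (M := MB) hg' ?_
      (fun t ht => (hρ t ht) t ht)
    intro t ht t' ht' s hs
    have e1 : (⟪g' t, E (θ s)⟫ : ℝ) - ⟪g' t', E (θ s)⟫ = ⟪g' t - g' t', E (θ s)⟫ := by
      rw [inner_sub_left]
    rw [e1]
    refine le_trans (abs_real_inner_le_norm _ _) ?_
    exact le_trans (mul_le_mul_of_nonneg_left (hEMB s hs) (norm_nonneg _))
      (le_of_eq (mul_comm _ _))
  have hudiag : ContinuousOn (fun t => u t t) S := by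
    refine diag_cont' (f := u) (M := MB) hgc ?_ (fun t ht => (hu2 t ht) t ht)
    intro t ht t' ht' s hs
    have e1 : u t s - u t' s = ⟪g t - g t', E (θ s)⟫ := by
      rw [hudef]; simp only []; rw [inner_sub_left]
    rw [e1]
    refine le_trans (abs_real_inner_le_norm _ _) ?_
    exact le_trans (mul_le_mul_of_nonneg_left (hEMB s hs) (norm_nonneg _))
      (le_of_eq (mul_comm _ _))
  -- derivative of Z in the first variable
  have hZ1 : ∀ s ∈ S, ∀ t ∈ S, HasDerivWithinAt (fun τ => Zk τ s) (Dk t s) S t := by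
    intro s hs t ht
    have h1 : HasDerivWithinAt (fun τ => (⟪g τ, E (θ s)⟫ : ℝ)) ⟪g' t, E (θ s)⟫ S t := by
      have := (hg t ht).inner ℝ (hasDerivWithinAt_const t S (E (θ s)))
      simpa using this
    have h2 : HasDerivWithinAt (fun τ => (⟪p s, θc τ⟫ : ℝ)) ⟪p s, θ'c t⟫ S t := by
      have := (hasDerivWithinAt_const t S (p s)).inner ℝ (hθcd t ht)
      simpa using this
    exact h1.add h2
  -- symmetry of Z
  have hZsym : ∀ t ∈ S, ∀ s ∈ S, Zk t s = Zk s t := by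
    intro t ht s hs
    have e1 := hswap t ht s hs
    have l1 : Zk t s = u t s + ⟪p s, θc t⟫ := rfl
    have l2 : Zk s t = u s t + ⟪p t, θc s⟫ := rfl
    have l3 : u s t = (⟪g s, E (θ t)⟫ : ℝ) := rfl
    rw [l1, l2, l3]
    linarith only [e1]
  -- derivative of the diagonal of Z
  have hφd : ∀ t ∈ S, HasDerivWithinAt (fun τ => Zk τ τ) (2 * Dk t t) S t := by
    intro t ht
    have hbase : HasDerivWithinAt (fun s => Zk t s) (Dk t t) S t := by
      refine (hZ1 t ht t ht).congr (fun y hy => hZsym t ht y hy) ?_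
      exact hZsym t ht t ht
    have hψ : HasDerivWithinAt (fun s => Zk s s - Zk t s) (Dk t t) S t := by
      rw [hasDerivWithinAt_iff_isLittleO]
      rw [Asymptotics.isLittleO_iff]
      intro c hc
      obtain ⟨δ, hδ, hest⟩ := hDest t ht c hc
      have hmem : S ∩ Metric.ball t δ ∈ 𝓝[S] t :=
        inter_mem self_mem_nhdsWithin
          (mem_nhdsWithin_of_mem_nhds (Metric.ball_mem_nhds t hδ))
      filter_upwards [hmem] with y hy
      obtain ⟨hyS, hyb⟩ := hy
      set S' : Set ℝ := S ∩ Metric.ball t δ with hS'def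
      have hconv : Convex ℝ S' := (convex_Icc _ _).inter (convex_ball _ _)
      have hder : ∀ σ ∈ S', HasDerivWithinAt
          (fun σ => Zk σ y - σ * Dk t t) (Dk σ y - Dk t t) S' σ := by
        intro σ hσ
        have hd1 : HasDerivWithinAt (fun σ => Zk σ y) (Dk σ y) S' σ :=
          (hZ1 y hyS σ hσ.1).mono inter_subset_left
        have hd2 : HasDerivWithinAt (fun σ : ℝ => σ * Dk t t) (Dk t t) S' σ := by
          simpa using (hasDerivWithinAt_id σ S').mul_const (Dk t t)
        exact hd1.sub hd2
      have hbound : ∀ σ ∈ S', ‖Dk σ y - Dk t t‖ ≤ c := by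
        intro σ hσ
        rw [Real.norm_eq_abs]
        have hσb : |σ - t| < δ := by
          have := hσ.2; rwa [Metric.mem_ball, Real.dist_eq] at this
        have hyb' : |y - t| < δ := by
          rwa [Metric.mem_ball, Real.dist_eq] at hyb
        exact (hest σ hσ.1 y hyS hσb hyb').le
      have htS' : t ∈ S' := ⟨ht, Metric.mem_ball_self hδ⟩
      have hyS' : y ∈ S' := ⟨hyS, hyb⟩
      have hmvt := hconv.norm_image_sub_le_of_norm_hasDerivWithin_le hder hbound htS' hyS'
      have hexp : (Zk y y - y * Dk t t) - (Zk t y - t * Dk t t)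
          = (Zk y y - Zk t y) - (Zk t t - Zk t t) - (y - t) * Dk t t := by ring
      rw [hexp] at hmvt
      have : (y - t) • Dk t t = (y - t) * Dk t t := rfl
      simpa [Real.norm_eq_abs, this] using hmvt
    have hsum : HasDerivWithinAt (fun s => (Zk s s - Zk t s) + Zk t s)
        (Dk t t + Dk t t) S t := hψ.add hbase
    have heq2 : (fun s => (Zk s s - Zk t s) + Zk t s) = fun s => Zk s s := by
      funext s; ring
    rw [heq2] at hsum
    have : Dk t t + Dk t t = 2 * Dk t t := by ring
    rwa [this] at hsum
  -- fundamental theorem of calculus helper on S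
  have hFTC : ∀ (f f' : ℝ → ℝ), (∀ x ∈ S, HasDerivWithinAt f (f' x) S x) →
      ContinuousOn f' S → ∀ τ ∈ S, ∫ x in (0:ℝ)..τ, f' x = f τ - f 0 := by
    intro f f' hder hcont τ hτ
    have h0τ : (0:ℝ) ≤ τ := hτ.1
    have hsub : Set.Icc (0:ℝ) τ ⊆ S := by
      rw [hSdef]; exact Set.Icc_subset_Icc (le_refl _) hτ.2
    apply intervalIntegral.integral_eq_sub_of_hasDeriv_right_of_le h0τ
    · exact (fun x hx => ((hder x (hsub hx)).continuousWithinAt).mono hsub)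
    · intro x hx
      have hxS : x ∈ S := hsub (Set.Ioo_subset_Icc_self hx)
      have hxT : x < T := lt_of_lt_of_le hx.2 hτ.2
      have hmem : S ∈ 𝓝[Set.Ioi x] x := by
        refine Filter.mem_of_superset (Ioc_mem_nhdsGT hxT) ?_
        intro y hy
        rw [hSdef]
        exact ⟨le_trans hxS.1 hy.1.le, hy.2⟩
      exact (hder x hxS).mono_of_mem_nhdsWithin hmem
    · have : ContinuousOn f' (Set.Icc (0:ℝ) τ) := hcont.mono hsub
      exact this.intervalIntegrable_of_Icc h0τ
  -- FTC for the diagonal of Z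
  have hZint : ∀ τ ∈ S, ∫ t in (0:ℝ)..τ, 2 * Dk t t = Zk τ τ := by
    intro τ hτ
    have hcont : ContinuousOn (fun t => 2 * Dk t t) S := continuousOn_const.mul hDdiag
    have := hFTC (fun t => Zk t t) (fun t => 2 * Dk t t) hφd hcont τ hτ
    have hZ00 : Zk 0 0 = 0 := by
      have l1 : Zk 0 0 = (⟪g 0, E (θ 0)⟫ : ℝ) + ⟪p 0, θc 0⟫ := rfl
      have l2 : θc 0 = ((θ 0 : V) : H) := rfl
      rw [l1, l2, hθ0]
      simp
    simpa [hZ00] using this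
  -- FTC for the kinetic energy
  have hnd : ∀ t ∈ S, HasDerivWithinAt (fun t => ‖θ' t‖^2)
      (2 * ⟪θ''c t, θ'c t⟫) S t := by
    intro t ht
    have h1 : HasDerivWithinAt (fun τ => (⟪θ'c τ, θ'c τ⟫ : ℝ))
        (⟪θ'c t, θ''c t⟫ + ⟪θ''c t, θ'c t⟫) S t :=
      (hθ'cd t ht).inner ℝ (hθ'cd t ht)
    have heqn : ∀ τ : ℝ, ‖θ' τ‖^2 = (⟪θ'c τ, θ'c τ⟫ : ℝ) := by
      intro τ
      rw [real_inner_self_eq_norm_sq]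
      have : ‖θ'c τ‖ = ‖θ' τ‖ := by rw [hθ'cdef]; exact (Submodule.coe_norm _).symm
      rw [this]
    have h2 : HasDerivWithinAt (fun τ => ‖θ' τ‖^2)
        (⟪θ'c t, θ''c t⟫ + ⟪θ''c t, θ'c t⟫) S t := by
      refine h1.congr (fun y _ => heqn y) (heqn t)
    have h3 : (⟪θ'c t, θ''c t⟫ : ℝ) + ⟪θ''c t, θ'c t⟫ = 2 * ⟪θ''c t, θ'c t⟫ := by
      rw [real_inner_comm (θ'c t) (θ''c t)]; ring
    rwa [h3] at h2
  have hnint : ∀ τ ∈ S, ∫ t in (0:ℝ)..τ, 2 * ⟪θ''c t, θ'c t⟫ = ‖θ' τ‖^2 := by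
    intro τ hτ
    have hcont : ContinuousOn (fun t => 2 * (⟪θ''c t, θ'c t⟫ : ℝ)) S :=
      continuousOn_const.mul (hθ''cc.inner hθ'cc)
    have := hFTC (fun t => ‖θ' t‖^2) (fun t => 2 * ⟪θ''c t, θ'c t⟫) hnd hcont τ hτ
    simp only [hθ'0] at this
    simpa using this
  -- energy identity
  have hIcc_sub : ∀ τ ∈ S, Set.uIcc (0:ℝ) τ ⊆ S := by
    intro τ hτ
    rw [Set.uIcc_of_le hτ.1, hSdef]
    exact Set.Icc_subset_Icc (le_refl _) hτ.2
  have hID : ∀ τ ∈ S, ‖θ' τ‖^2 + A τ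
      = 2 * u τ τ - (∫ t in (0:ℝ)..τ, 2 * ⟪g' t, E (θ t)⟫)
        - (∫ t in (0:ℝ)..τ, 2 * ⟪r t, θ'c t⟫) := by
    intro τ hτ
    have hie : IntervalIntegrable (fun t => 2 * (⟪g' t, E (θ t)⟫ : ℝ))
        MeasureTheory.volume 0 τ :=
      ((continuousOn_const.mul hediag).mono (hIcc_sub τ hτ)).intervalIntegrable
    have hir : IntervalIntegrable (fun t => 2 * (⟪r t, θ'c t⟫ : ℝ))
        MeasureTheory.volume 0 τ :=
      ((continuousOn_const.mul (hr.inner hθ'cc)).mono (hIcc_sub τ hτ)).intervalIntegrable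
    have hiθ : IntervalIntegrable (fun t => 2 * (⟪θ''c t, θ'c t⟫ : ℝ))
        MeasureTheory.volume 0 τ :=
      ((continuousOn_const.mul (hθ''cc.inner hθ'cc)).mono (hIcc_sub τ hτ)).intervalIntegrable
    have hsplit : ∫ t in (0:ℝ)..τ, 2 * Dk t t
        = (∫ t in (0:ℝ)..τ, 2 * ⟪g' t, E (θ t)⟫)
          + ((∫ t in (0:ℝ)..τ, 2 * ⟪r t, θ'c t⟫)
            + (∫ t in (0:ℝ)..τ, 2 * ⟪θ''c t, θ'c t⟫)) := by
      rw [← intervalIntegral.integral_add hir hiθ,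
        ← intervalIntegral.integral_add hie (hir.add hiθ)]
      apply intervalIntegral.integral_congr
      intro t _
      have l1 : Dk t t = (⟪g' t, E (θ t)⟫ : ℝ) + ⟪p t, θ'c t⟫ := rfl
      have l2 : (⟪p t, θ'c t⟫ : ℝ) = ⟪r t, θ'c t⟫ + ⟪θ''c t, θ'c t⟫ := by
        rw [hpdef]; exact inner_add_left _ _ _
      simp only [l1, l2]
      ring
    have h1 := hZint τ hτ
    have h2 := hnint τ hτ
    have h3 : Zk τ τ = 2 * u τ τ - A τ := by
      have e := hEQ τ hτ (θ τ)
      have l1 : Zk τ τ = u τ τ + ⟪p τ, ((θ τ : V) : H)⟫ := rfl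
      have l2 : A τ = a (θ τ) (θ τ) := rfl
      have l4 : u τ τ = (⟪g τ, E (θ τ)⟫ : ℝ) := rfl
      linarith only [e, l1, l2, l4]
    rw [hsplit, h2] at h1
    rw [h3] at h1
    linarith only [h1]
  -- the energy functional and its maximum
  set F : ℝ → ℝ := fun t => ‖θ' t‖^2 + A t with hFdef
  have hFcont : ContinuousOn F S := by
    apply ContinuousOn.add
    · have hθ'V : ContinuousOn θ' S := fun t ht => (hθ' t ht).continuousWithinAt
      exact hθ'V.norm.pow 2
    · have hAeq : Set.EqOn A (fun t => u t t - ⟪p t, θc t⟫) S := by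
        intro t ht
        have e := hEQ t ht (θ t)
        have l2 : A t = a (θ t) (θ t) := rfl
        have l4 : u t t = (⟪g t, E (θ t)⟫ : ℝ) := rfl
        have l5 : (⟪p t, θc t⟫ : ℝ) = ⟪p t, ((θ t : V) : H)⟫ := rfl
        simp only []
        linarith only [e, l2, l4, l5]
      exact (hudiag.sub (hpc.inner hθcc)).congr hAeq
  obtain ⟨τs, hτsS, hτsmax⟩ := isCompact_Icc.exists_isMaxOn hS_ne hFcont
  set M1 : ℝ := F τs with hM1def
  have hFle : ∀ t ∈ S, F t ≤ M1 := fun t ht => isMaxOn_iff.mp hτsmax t ht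
  have hM10 : 0 ≤ M1 := by
    have h00 : F 0 = 0 := by
      have l1 : F 0 = ‖θ' 0‖^2 + a (θ 0) (θ 0) := rfl
      rw [l1, hθ'0, hθ0]
      simp
    linarith only [hFle 0 h0S, h00]
  have hAM : ∀ t ∈ S, A t ≤ M1 := by
    intro t ht
    have l : F t = ‖θ' t‖^2 + A t := rfl
    have := hFle t ht
    nlinarith only [sq_nonneg ‖θ' t‖, this, l]
  have hnM : ∀ t ∈ S, ‖θ' t‖^2 ≤ M1 := by
    intro t ht
    have l : F t = ‖θ' t‖^2 + A t := rfl
    have := hFle t ht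
    linarith only [hA0 t, this, l]
  have hFval : ∀ t : ℝ, F t = ‖θ' t‖^2 + A t := fun t => rfl
  have hAval : ∀ t : ℝ, A t = a (θ t) (θ t) := fun t => rfl
  have huval : ∀ t s : ℝ, u t s = (⟪g t, E (θ s)⟫ : ℝ) := fun t s => rfl
  set εq : ℝ := C₁^2*h^4/α with hεqdef
  have hεq0 : 0 < εq := by rw [hεqdef]; positivity
  have hcM : ∀ t ∈ S, (cN t)^2 ≤ εq * M1 := by
    intro t ht
    have h1 : α * Nh (θ t)^2 ≤ M1 := le_trans (hAineq t) (hAM t ht)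
    have hexp : (cN t)^2 = C₁^2*h^4 * Nh (θ t)^2 := by rw [hcNdef]; ring
    rw [hexp, hεqdef, div_mul_eq_mul_div, le_div_iff₀ hα]
    have h2 := mul_le_mul_of_nonneg_left h1 (show (0:ℝ) ≤ C₁^2*h^4 by positivity)
    nlinarith only [h2]
  set Ig : ℝ := ∫ s in (0:ℝ)..T, ‖g' s‖^2 with hIgdef
  set Ir : ℝ := ∫ s in (0:ℝ)..T, ‖r s‖^2 with hIrdef
  have hIg0 : 0 ≤ Ig := by
    rw [hIgdef]
    exact intervalIntegral.integral_nonneg hT.le (fun x _ => sq_nonneg _)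
  have hIr0 : 0 ≤ Ir := by
    rw [hIrdef]
    exact intervalIntegral.integral_nonneg hT.le (fun x _ => sq_nonneg _)
  clear_value θc θ'c θ''c p u Dk Zk A cN Q MB F M1 εq Ig Ir φpair Mg Mg' Mp Mθ
  -- bound (I) : the boundary term
  have hB1 : 2 * u τs τs ≤ 4*εq*Mg^2 + M1/4 := by
    have hu1 : u τs τs ≤ Mg * cN τs := by
      rw [huval]
      refine le_trans (real_inner_le_norm _ _) ?_
      exact mul_le_mul (hMg τs hτsS) (hEb τs) (norm_nonneg _) hMg0
    have hc2 := hcM τs hτsS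
    have hkey : 2*(Mg * cN τs) ≤ 4*εq*Mg^2 + M1/4 := by
      nlinarith only [sq_nonneg (4*εq*Mg - cN τs), hεq0, hc2, hcN0 τs, hMg0]
    linarith only [hu1, hkey, hMg0, hcN0 τs]
  -- pointwise Young inequalities
  set dM : ℝ := M1/(4*T) with hdMdef
  have hdM4 : 4*T*dM = M1 := by rw [hdMdef]; field_simp
  have hdM0 : 0 ≤ dM := by rw [hdMdef]; positivity
  have hYe : ∀ t ∈ S, -(2 * ⟪g' t, E (θ t)⟫) ≤ 4*T*εq*‖g' t‖^2 + dM := by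
    intro t ht
    have h1 : |(⟪g' t, E (θ t)⟫ : ℝ)| ≤ ‖g' t‖ * cN t :=
      le_trans (abs_real_inner_le_norm _ _)
        (mul_le_mul_of_nonneg_left (hEb t) (norm_nonneg _))
    have h2 : (cN t)^2 ≤ εq * M1 := hcM t ht
    have h3 : -(⟪g' t, E (θ t)⟫ : ℝ) ≤ ‖g' t‖ * cN t := by
      have k2 := neg_abs_le ((⟪g' t, E (θ t)⟫ : ℝ))
      linarith only [k2, h1]
    have h2' : (cN t)^2 ≤ εq*(4*T*dM) := by rw [hdM4]; exact h2
    have hkey : 2*(‖g' t‖ * cN t) ≤ 4*T*εq*‖g' t‖^2 + dM := by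
      nlinarith only [sq_nonneg (4*T*εq*‖g' t‖ - cN t), mul_pos hT hεq0,
        h2', hcN0 t, norm_nonneg (g' t)]
    linarith only [h3, hkey, mul_le_mul_of_nonneg_left h3 (by norm_num : (0:ℝ) ≤ 2)]
  have hYr : ∀ t ∈ S, -(2 * ⟪r t, θ'c t⟫) ≤ 4*T*‖r t‖^2 + dM := by
    intro t ht
    have h1 : |(⟪r t, θ'c t⟫ : ℝ)| ≤ ‖r t‖ * ‖θ'c t‖ := abs_real_inner_le_norm _ _
    have h2 : ‖θ'c t‖^2 ≤ M1 := by
      have : ‖θ'c t‖ = ‖θ' t‖ := by rw [hθ'cdef]; exact (Submodule.coe_norm _).symm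
      rw [this]
      exact hnM t ht
    have h3 : -(⟪r t, θ'c t⟫ : ℝ) ≤ ‖r t‖ * ‖θ'c t‖ := by
      have k2 := neg_abs_le ((⟪r t, θ'c t⟫ : ℝ))
      linarith only [k2, h1]
    have h2' : ‖θ'c t‖^2 ≤ 4*T*dM := by rw [hdM4]; exact h2
    have hkey : 2*(‖r t‖ * ‖θ'c t‖) ≤ 4*T*‖r t‖^2 + dM := by
      nlinarith only [sq_nonneg (4*T*‖r t‖ - ‖θ'c t‖), hT, h2',
        norm_nonneg (r t), norm_nonneg (θ'c t)]
    linarith only [h3, hkey, mul_le_mul_of_nonneg_left h3 (by norm_num : (0:ℝ) ≤ 2)]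
  -- integral bounds
  have hτs0 : (0:ℝ) ≤ τs := hτsS.1
  have hsubτs : Set.uIcc (0:ℝ) τs ⊆ S := hIcc_sub τs hτsS
  have h4Tεq : (0:ℝ) ≤ 4*T*εq := mul_nonneg (mul_nonneg (by norm_num) hT.le) hεq0.le
  have hint_e : IntervalIntegrable (fun t => 2 * (⟪g' t, E (θ t)⟫ : ℝ))
      MeasureTheory.volume 0 τs :=
    ((continuousOn_const.mul hediag).mono hsubτs).intervalIntegrable
  have hint_a : IntervalIntegrable (fun t => 4*T*εq*‖g' t‖^2)
      MeasureTheory.volume 0 τs :=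
    ((continuousOn_const.mul ((hg'.norm.pow 2))).mono hsubτs).intervalIntegrable
  have hint_g2 : IntervalIntegrable (fun t => 4*T*εq*‖g' t‖^2 + dM)
      MeasureTheory.volume 0 τs := hint_a.add intervalIntegrable_const
  have hconstτ : τs * dM ≤ M1/4 := by
    have h1 : τs*dM ≤ T*dM := mul_le_mul_of_nonneg_right hτsS.2 hdM0
    linarith only [hdM4, h1]
  have hIe : -(∫ t in (0:ℝ)..τs, 2 * ⟪g' t, E (θ t)⟫) ≤ 4*T*εq*Ig + M1/4 := by
    have hmono : ∫ t in (0:ℝ)..τs, -(2 * ⟪g' t, E (θ t)⟫)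
        ≤ ∫ t in (0:ℝ)..τs, (4*T*εq*‖g' t‖^2 + dM) := by
      apply intervalIntegral.integral_mono_on hτs0 hint_e.neg hint_g2
      intro x hx
      exact hYe x (hsubτs (by rw [Set.uIcc_of_le hτs0]; exact hx))
    rw [intervalIntegral.integral_neg] at hmono
    have hsplit2 : ∫ t in (0:ℝ)..τs, (4*T*εq*‖g' t‖^2 + dM)
        = 4*T*εq*(∫ t in (0:ℝ)..τs, ‖g' t‖^2) + τs*dM := by
      rw [intervalIntegral.integral_add hint_a intervalIntegrable_const,
        intervalIntegral.integral_const_mul, intervalIntegral.integral_const]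
      simp only [smul_eq_mul, sub_zero]
    have hIsub : (∫ t in (0:ℝ)..τs, ‖g' t‖^2) ≤ ∫ t in (0:ℝ)..T, ‖g' t‖^2 := by
      apply intervalIntegral.integral_mono_interval (le_refl (0:ℝ)) hτs0 hτsS.2
      · exact MeasureTheory.ae_of_all _ (fun x => sq_nonneg _)
      · apply ContinuousOn.intervalIntegrable
        have hsubT : Set.uIcc (0:ℝ) T ⊆ S := by rw [Set.uIcc_of_le hT.le, hSdef]
        exact (hg'.norm.pow 2).mono hsubT
    have hscale : 4*T*εq*(∫ t in (0:ℝ)..τs, ‖g' t‖^2) ≤ 4*T*εq*Ig := by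
      rw [hIgdef]
      exact mul_le_mul_of_nonneg_left hIsub h4Tεq
    linarith only [hmono, hsplit2, hconstτ, hscale]
  have hint_r : IntervalIntegrable (fun t => 2 * (⟪r t, θ'c t⟫ : ℝ))
      MeasureTheory.volume 0 τs :=
    ((continuousOn_const.mul (hr.inner hθ'cc)).mono hsubτs).intervalIntegrable
  have hint_b : IntervalIntegrable (fun t => 4*T*‖r t‖^2)
      MeasureTheory.volume 0 τs :=
    ((continuousOn_const.mul ((hr.norm.pow 2))).mono hsubτs).intervalIntegrable
  have hIr2 : -(∫ t in (0:ℝ)..τs, 2 * ⟪r t, θ'c t⟫) ≤ 4*T*Ir + M1/4 := by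
    have hmono : ∫ t in (0:ℝ)..τs, -(2 * ⟪r t, θ'c t⟫)
        ≤ ∫ t in (0:ℝ)..τs, (4*T*‖r t‖^2 + dM) := by
      apply intervalIntegral.integral_mono_on hτs0 hint_r.neg
        (hint_b.add intervalIntegrable_const)
      intro x hx
      exact hYr x (hsubτs (by rw [Set.uIcc_of_le hτs0]; exact hx))
    rw [intervalIntegral.integral_neg] at hmono
    have hsplit2 : ∫ t in (0:ℝ)..τs, (4*T*‖r t‖^2 + dM)
        = 4*T*(∫ t in (0:ℝ)..τs, ‖r t‖^2) + τs*dM := by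
      rw [intervalIntegral.integral_add hint_b intervalIntegrable_const,
        intervalIntegral.integral_const_mul, intervalIntegral.integral_const]
      simp only [smul_eq_mul, sub_zero]
    have hIsub : (∫ t in (0:ℝ)..τs, ‖r t‖^2) ≤ ∫ t in (0:ℝ)..T, ‖r t‖^2 := by
      apply intervalIntegral.integral_mono_interval (le_refl (0:ℝ)) hτs0 hτsS.2
      · exact MeasureTheory.ae_of_all _ (fun x => sq_nonneg _)
      · apply ContinuousOn.intervalIntegrable
        have hsubT : Set.uIcc (0:ℝ) T ⊆ S := by rw [Set.uIcc_of_le hT.le, hSdef]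
        exact (hr.norm.pow 2).mono hsubT
    have hscale : 4*T*(∫ t in (0:ℝ)..τs, ‖r t‖^2) ≤ 4*T*Ir := by
      rw [hIrdef]
      exact mul_le_mul_of_nonneg_left hIsub (by positivity)
    linarith only [hmono, hsplit2, hconstτ, hscale]
  -- combining everything
  have hM1eq : M1 = ‖θ' τs‖^2 + A τs := by rw [hM1def, hFval]
  have hMbound : M1 ≤ 16*εq*Mg^2 + 16*T*εq*Ig + 16*T*Ir := by
    have hid := hID τs hτsS
    linarith only [hB1, hIe, hIr2, hid, hM1eq]
  -- conclusion
  intro t ht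
  have hbdd : BddAbove (Set.range (fun s : S => ‖g (s:ℝ)‖^2)) := by
    refine ⟨Mg^2, ?_⟩
    rintro x ⟨s, rfl⟩
    exact pow_le_pow_left₀ (norm_nonneg _) (hMg s s.2) 2
  set Sup : ℝ := ⨆ s : S, ‖g (s:ℝ)‖^2 with hSupdef
  have hSup : Mg^2 ≤ Sup := by
    have hle := le_ciSup hbdd (⟨tg, htgS⟩ : S)
    rw [hSupdef, hMgdef]
    exact hle
  have hSup0 : (0:ℝ) ≤ Sup := le_trans (sq_nonneg Mg) hSup
  have hmain : ‖θ' t‖^2 + α * Nh (θ t)^2 ≤ M1 := by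
    have h1 := hFle t ht
    have h2 := hFval t
    linarith only [hAineq t, h1, h2]
  have hp4 : (0:ℝ) < h^4 := by positivity
  have hεqexp : εq = (C₁^2/α)*h^4 := by rw [hεqdef]; ring
  have hcoef1 : 16*(C₁^2/α) ≤ 16*(C₁^2/α+1)*(T+1) := by nlinarith only [mul_nonneg hγ.le hT.le, hγ, hT]
  have hcoef2 : 16*T*(C₁^2/α) ≤ 16*(C₁^2/α+1)*(T+1) := by nlinarith only [mul_nonneg hγ.le hT.le, hγ, hT]
  have hcoef3 : 16*T ≤ 16*(C₁^2/α+1)*(T+1) := by nlinarith only [mul_nonneg hγ.le hT.le, hγ, hT]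
  have e1 : 16*εq*Mg^2 ≤ 16*(C₁^2/α+1)*(T+1)*(h^4*Sup) := by
    have a1 : h^4*Mg^2 ≤ h^4*Sup := mul_le_mul_of_nonneg_left hSup hp4.le
    have a0 : (0:ℝ) ≤ h^4*Mg^2 := mul_nonneg hp4.le (sq_nonneg Mg)
    calc 16*εq*Mg^2 = 16*(C₁^2/α)*(h^4*Mg^2) := by rw [hεqexp]; ring
      _ ≤ 16*(C₁^2/α)*(h^4*Sup) := by
          refine mul_le_mul_of_nonneg_left a1 ?_
          linarith only [hγ]
      _ ≤ 16*(C₁^2/α+1)*(T+1)*(h^4*Sup) :=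
          mul_le_mul_of_nonneg_right hcoef1 (le_trans a0 a1)
  have e2 : 16*T*εq*Ig ≤ 16*(C₁^2/α+1)*(T+1)*(h^4*Ig) := by
    have a0 : (0:ℝ) ≤ h^4*Ig := mul_nonneg hp4.le hIg0
    calc 16*T*εq*Ig = (16*T*(C₁^2/α))*(h^4*Ig) := by rw [hεqexp]; ring
      _ ≤ (16*(C₁^2/α+1)*(T+1))*(h^4*Ig) := mul_le_mul_of_nonneg_right hcoef2 a0
  have e3 : 16*T*Ir ≤ 16*(C₁^2/α+1)*(T+1)*Ir := by
    have k1 : (16*T)*Ir ≤ (16*(C₁^2/α+1)*(T+1))*Ir := mul_le_mul_of_nonneg_right hcoef3 hIr0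
    linarith only [k1]
  have hdist : 16*(C₁^2/α+1)*(T+1)*(h^4*(Sup + Ig) + Ir)
      = 16*(C₁^2/α+1)*(T+1)*(h^4*Sup) + 16*(C₁^2/α+1)*(T+1)*(h^4*Ig)
        + 16*(C₁^2/α+1)*(T+1)*Ir := by ring
  linarith only [hmain, hMbound, e1, e2, e3, hdist]
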